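/- The curve -y^{f+1} + y^f - x = 0 (framed vertex mirror curve, f a positive integer), solved for y near (x,y) = (0,1), has the expansion y(x) = 1 - Σ_{n≥1} (x^n Π_{j=0}^{n-2}(nf+j) / n!); in particular the coefficient of x^n in 1 - y(x) is Π_{j=0}^{n-2}(nf+j)/n! = Γ(nf+n-1)/(Γ(nf)·n!). -/

import Mathlib

open PowerSeries

open Finset


noncomputable def Ra (p r i : ℕ) : ℚ :=
  if r = 0 then (if i = 0 then 1 else 0)
  else (r : ℚ) * ((i * p + r).choose i : ℚ) / ((i * p + r : ℕ) : ℚ)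

lemma Ra_zero (p r : ℕ) : Ra p r 0 = 1 := by
  rcases Nat.eq_zero_or_pos r with h | h
  · simp [Ra, h]
  · have h2 : (r : ℚ) ≠ 0 := by positivity
    simp [Ra, h.ne', h2]

lemma Ra_of_pos (p r i : ℕ) (hr : r ≠ 0) :
    Ra p r i = (r : ℚ) * ((i * p + r).choose i : ℚ) / ((i * p + r : ℕ) : ℚ) := by
  simp [Ra, hr]

lemma Ra_rec (p s i : ℕ) (hp : 1 ≤ p) :
    Ra p (s + 1) (i + 1) = Ra p s (i + 1) + Ra p (s + p) i := by
  rcases Nat.eq_zero_or_pos s with rfl | hs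
  · rw [Ra_of_pos p (0+1) (i+1) one_ne_zero, Ra_of_pos p (0+p) i (by omega),
      show Ra p 0 (i+1) = 0 from by simp [Ra], zero_add]
    have e1 : i * p + (0 + p) = (i+1) * p := by ring
    rw [e1]
    have key : ((((i+1) * p : ℕ):ℚ) + 1) * ((((i+1)*p).choose i : ℕ) : ℚ)
        = (((((i+1)*p) + 1).choose (i+1) : ℕ) : ℚ) * ((i:ℚ)+1) := by
      exact_mod_cast congrArg (Nat.cast (R := ℚ)) (Nat.add_one_mul_choose_eq ((i+1)*p) i)
    push_cast at *
    field_simp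
    linear_combination (-(p:ℚ)) * key
  · obtain ⟨t, rfl⟩ := Nat.exists_eq_add_of_le hs
    rw [Ra_of_pos p (1 + t + 1) (i+1) (by omega), Ra_of_pos p (1 + t) (i+1) (by omega),
      Ra_of_pos p (1 + t + p) i (by omega)]
    set N := (i+1) * p + (1 + t) with hN
    have e1 : (i+1) * p + (1 + t + 1) = N + 1 := by omega
    have e2 : i * p + (1 + t + p) = N := by rw [hN]; ring
    rw [e1, e2]
    have key : ((N:ℚ) + 1) * ((N.choose i : ℕ) : ℚ)
        = (((N + 1).choose (i+1) : ℕ) : ℚ) * ((i:ℚ)+1) := by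
      exact_mod_cast congrArg (Nat.cast (R := ℚ)) (Nat.add_one_mul_choose_eq N i)
    have pascal : (((N+1).choose (i+1) : ℕ) : ℚ) = (N.choose i : ℚ) + (N.choose (i+1) : ℚ) := by
      exact_mod_cast congrArg (Nat.cast (R := ℚ)) (Nat.choose_succ_succ N i)
    have hNpos : (0:ℚ) < (N:ℚ) := by
      have : 1 ≤ N := by omega
      exact_mod_cast this
    have hpi : (N:ℚ) - (1 + (t:ℚ)) = (p:ℚ) * ((i:ℚ)+1) := by
      have h3 : (N:ℚ) = ((i:ℚ)+1)*(p:ℚ) + (1+(t:ℚ)) := by rw [hN]; push_cast; ring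
      rw [h3]; ring
    push_cast
    field_simp
    linear_combination (((N:ℚ)+1)*(1+(t:ℚ))) * pascal + (-(p:ℚ)) * key
      + ((((N+1).choose (i+1) : ℕ) : ℚ)) * hpi

lemma Ra_core (p : ℕ) (hp : 1 ≤ p) :
    ∀ m r, (∑ i ∈ range (m+1), Ra p r i * Ra p 1 (m - i)) = Ra p (r+1) m := by
  intro m
  induction m using Nat.strong_induction_on with
  | _ m ih =>
    intro r
    induction r with
    | zero =>
      rw [Finset.sum_eq_single 0]
      · simp [Ra_zero, Ra]
      · intro b _ hb
        simp [Ra, hb]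
      · intro h; exact absurd (Finset.mem_range.mpr (Nat.succ_pos m)) h
    | succ s ihs =>
      rcases Nat.eq_zero_or_pos m with rfl | hm
      · simp [Ra_zero]
      · obtain ⟨u, rfl⟩ : ∃ u, m = u + 1 := ⟨m - 1, by omega⟩
        rw [Finset.sum_range_succ']
        have step : ∀ i ∈ range (u + 1), Ra p (s+1) (i+1) * Ra p 1 (u + 1 - (i+1))
            = Ra p s (i+1) * Ra p 1 (u + 1 - (i+1))
              + Ra p (s+p) i * Ra p 1 (u - i) := by
          intro i hi
          rw [show u + 1 - (i+1) = u - i from by omega, Ra_rec p s i hp, add_mul]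
        rw [Finset.sum_congr rfl step, Finset.sum_add_distrib]
        have h1 : (∑ i ∈ range (u + 1), Ra p s (i+1) * Ra p 1 (u + 1 - (i+1)))
            = Ra p (s+1) (u+1) - Ra p s 0 * Ra p 1 (u+1) := by
          have h0 := ihs
          rw [Finset.sum_range_succ'] at h0
          rw [Nat.sub_zero] at h0
          linarith [h0]
        have h2 : (∑ i ∈ range (u + 1), Ra p (s+p) i * Ra p 1 (u - i))
            = Ra p (s+p+1) u := ih u (by omega) (s+p)
        rw [h1, h2, Ra_zero, Ra_zero, one_mul, one_mul, Nat.sub_zero]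
        have h3 := Ra_rec p (s+1) u hp
        rw [show s + 1 + p = s + p + 1 from by omega] at h3
        rw [h3]; ring


lemma prod_asc (s : ℕ) (hs : 1 ≤ s) : ∀ k, (∏ j ∈ range k, (s+j)) * (s-1).factorial = (s+k-1).factorial := by
  intro k
  induction k with
  | zero => simp
  | succ k ih =>
    rw [Finset.prod_range_succ, mul_right_comm, ih]
    have e : s + (k+1) - 1 = (s + k - 1) + 1 := by omega
    rw [e, Nat.factorial_succ]
    have e2 : s + k - 1 + 1 = s + k := by omega
    rw [e2, mul_comm]

lemma bridge (f k : ℕ) (hf : 1 ≤ f) :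
    (∏ j ∈ range k, (((k+1) * f + j : ℕ) : ℚ)) / (Nat.factorial (k+1) : ℚ)
      = (f : ℚ) * ((k * (f+1) + f).choose k : ℚ) / ((k * (f+1) + f : ℕ) : ℚ) := by
  set s := (k+1) * f with hsdef
  have hs : 1 ≤ s := Nat.mul_pos (Nat.succ_pos k) hf
  have e : k * (f+1) + f = s + k := by rw [hsdef]; ring
  rw [e]
  -- ℕ-level key : (∏ j<k, (s+j)) * (s+k) = f * ((s+k).choose k) * (k+1)!
  have hA : ((∏ j ∈ range k, (s+j)) * (s+k)) * ((s-1).factorial * Nat.factorial k * Nat.factorial s)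
      = (f * ((s+k).choose k) * Nat.factorial (k+1)) * ((s-1).factorial * Nat.factorial k * Nat.factorial s) := by
    have h1 : (∏ j ∈ range k, (s+j)) * (s-1).factorial = (s+k-1).factorial := prod_asc s hs k
    have h2 : (s+k) * (s+k-1).factorial = (s+k).factorial := by
      have e2 : s + k = (s + k - 1) + 1 := by omega
      rw [e2, Nat.factorial_succ]; congr 1 <;> omega
    have h3 : ((s+k).choose k) * Nat.factorial k * Nat.factorial s = (s+k).factorial := by
      have := Nat.choose_mul_factorial_mul_factorial (Nat.le_add_left k s)
      simpa [Nat.add_sub_cancel] using this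
    have h4 : Nat.factorial s = s * (s-1).factorial := by
      have e4 : s = (s-1) + 1 := by omega
      rw [e4, Nat.factorial_succ]; congr 1 <;> omega
    have h5 : Nat.factorial (k+1) = (k+1) * Nat.factorial k := Nat.factorial_succ k
    calc ((∏ j ∈ range k, (s+j)) * (s+k)) * ((s-1).factorial * Nat.factorial k * Nat.factorial s)
        = ((∏ j ∈ range k, (s+j)) * (s-1).factorial) * (s+k) * (Nat.factorial k * Nat.factorial s) := by ring
      _ = (s+k) * (s+k-1).factorial * (Nat.factorial k * Nat.factorial s) := by rw [h1]; ring
      _ = (s+k).factorial * (Nat.factorial k * Nat.factorial s) := by rw [h2]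
      _ = (f * ((s+k).choose k) * Nat.factorial (k+1)) * ((s-1).factorial * Nat.factorial k * Nat.factorial s) := by
          rw [h5, hsdef]
          calc (s+k).factorial * (Nat.factorial k * Nat.factorial s)
              = ((s+k).choose k * Nat.factorial k * Nat.factorial s) * (Nat.factorial k * Nat.factorial s) := by rw [h3]
            _ = _ := by rw [h4, hsdef]; ring
  have hA' : (∏ j ∈ range k, (s+j)) * (s+k) = f * ((s+k).choose k) * Nat.factorial (k+1) :=
    Nat.eq_of_mul_eq_mul_right (by positivity) hA
  have hq : ((∏ j ∈ range k, (s+j)) * (s+k) : ℚ) = (f : ℚ) * ((s+k).choose k) * (Nat.factorial (k+1)) := by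
    exact_mod_cast congrArg (Nat.cast (R := ℚ)) hA'
  have hd1 : ((Nat.factorial (k+1) : ℕ) : ℚ) ≠ 0 := by positivity
  have hd2 : ((s+k : ℕ) : ℚ) ≠ 0 := by positivity
  rw [div_eq_div_iff hd1 hd2]
  push_cast at hq ⊢
  linarith [hq]

/-- The series `∑_{n≥1} (∏_{j=0}^{n-2}(nf+j)/n!) x^n`, i.e. `1 - y(x)` for the
framed vertex disk amplitude. -/
noncomputable def framedDisk (f : ℕ) : PowerSeries ℚ :=
  PowerSeries.mk fun n =>
    if n = 0 then 0
    else (∏ j ∈ Finset.range (n - 1), ((n * f + j : ℕ) : ℚ)) / Nat.factorial n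

noncomputable def al (p r : ℕ) : PowerSeries ℚ := PowerSeries.mk (Ra p r)

lemma al_zero (p : ℕ) : al p 0 = 1 := by
  ext n
  cases n with
  | zero => simp [al, Ra]
  | succ k => simp [al, Ra, PowerSeries.coeff_one]

lemma al_mul_one (p r : ℕ) (hp : 1 ≤ p) : al p r * al p 1 = al p (r+1) := by
  ext n
  rw [PowerSeries.coeff_mul, Finset.Nat.sum_antidiagonal_eq_sum_range_succ_mk]
  simpa [al] using Ra_core p hp n r

lemma al_mul (p : ℕ) (hp : 1 ≤ p) : ∀ s r, al p r * al p s = al p (r+s) := by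
  intro s
  induction s with
  | zero => intro r; simp [al_zero]
  | succ s ih =>
    intro r
    rw [← al_mul_one p s hp, ← mul_assoc, ih r, al_mul_one p (r+s) hp]
    ring_nf

lemma framedDisk_eq (f : ℕ) (hf : 1 ≤ f) : framedDisk f = X * al (f+1) f := by
  ext n
  cases n with
  | zero => simp [framedDisk, al]
  | succ k =>
    rw [PowerSeries.coeff_succ_X_mul]
    have : coeff (k+1) (framedDisk f)
        = (∏ j ∈ Finset.range k, (((k+1) * f + j : ℕ) : ℚ)) / (Nat.factorial (k+1) : ℚ) := by
      simp [framedDisk]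
    rw [this, bridge f k hf]
    rw [show al (f+1) f = PowerSeries.mk (Ra (f+1) f) from rfl, PowerSeries.coeff_mk,
      Ra_of_pos (f+1) f k (by omega)]

lemma keynum (f m : ℕ) (hf : 1 ≤ f) :
    (((f+1 : ℕ):ℚ) * ((m+2 : ℕ):ℚ) - 2) * Ra (f+1) (2*f) m
      = 2 * ((m+1 : ℕ):ℚ) * Ra (f+1) f (m+1) := by
  set p := f + 1 with hp
  set N := m * p + 2 * f with hN
  have e1 : (m+1) * p + f = N + 1 := by rw [hN, hp]; ring
  rw [Ra_of_pos p (2*f) m (by omega), Ra_of_pos p f (m+1) (by omega), e1]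
  have key : ((N:ℚ) + 1) * ((N.choose m : ℕ) : ℚ)
      = (((N + 1).choose (m+1) : ℕ) : ℚ) * ((m:ℚ)+1) := by
    exact_mod_cast congrArg (Nat.cast (R := ℚ)) (Nat.add_one_mul_choose_eq N m)
  have hNval : ((f:ℚ)+1) * ((m:ℚ)+2) - 2 = (N:ℚ) := by
    rw [hN, hp]; push_cast; ring
  have hNpos : (0:ℚ) < (N:ℚ) := by
    have : 1 ≤ N := by rw [hN]; omega  -- N ≥ 2f ≥ 2
    exact_mod_cast this
  push_cast
  rw [show (m * p + 2*f).choose m = N.choose m from by rw [hN]]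
  have hd : (m:ℚ) * ((f:ℚ)+1) + 2*(f:ℚ) = (N:ℚ) := by rw [hN, hp]; push_cast; ring
  rw [hp]; push_cast; rw [hd]
  field_simp
  linear_combination (((N.choose m : ℕ):ℚ)*((N:ℚ)+1)) * hNval + (N:ℚ) * key
lemma coeff_X_deriv (g : PowerSeries ℚ) (n : ℕ) :
    coeff n (X * d⁄dX ℚ g) = (n:ℚ) * coeff n g := by
  cases n with
  | zero => simp [PowerSeries.coeff_zero_eq_constantCoeff, map_mul]
  | succ k => rw [coeff_succ_X_mul, coeff_derivative]; push_cast; ring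

lemma sym (a : ℕ → ℚ) (n : ℕ) :
    2 * (∑ k ∈ range (n+1), (k:ℚ) * a k * a (n-k))
      = (n:ℚ) * ∑ k ∈ range (n+1), (a k * a (n-k)) := by
  have A := Finset.sum_range_reflect (fun k => (k:ℚ) * a k * a (n-k)) (n+1)
  simp only [Nat.add_sub_cancel] at A
  rw [two_mul]
  nth_rewrite 1 [← A]
  rw [← Finset.sum_add_distrib, Finset.mul_sum]
  apply Finset.sum_congr rfl
  intro j hj
  have hj' : j ≤ n := by
    have := Finset.mem_range.mp hj; omega
  have h1 : n - (n - j) = j := by omega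
  rw [h1, Nat.cast_sub hj']; ring

lemma coeff_zz (f : ℕ) (hf : 1 ≤ f) (m : ℕ) :
    coeff (m+2) (framedDisk f * framedDisk f) = Ra (f+1) (2*f) m := by
  rw [framedDisk_eq f hf]
  have h1 : (X * al (f+1) f) * (X * al (f+1) f) = X * (X * (al (f+1) f * al (f+1) f)) := by ring
  rw [h1, al_mul (f+1) (by omega) f f, show f + f = 2 * f from by ring,
    coeff_succ_X_mul, coeff_succ_X_mul]
  simp [al]

lemma coeff_fd (f : ℕ) (m : ℕ) (hf : 1 ≤ f) :
    coeff (m+1) (framedDisk f) = Ra (f+1) f m := by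
  rw [framedDisk_eq f hf, coeff_succ_X_mul]; simp [al]

lemma Rrel (f : ℕ) (hf : 1 ≤ f) :
    framedDisk f - framedDisk f * framedDisk f
      = X * (d⁄dX ℚ (framedDisk f)) - ((f:ℚ)+1) • (X * (d⁄dX ℚ (framedDisk f)) * framedDisk f) := by
  set z := framedDisk f with hz
  set a : ℕ → ℚ := fun n => coeff n z with ha
  have ha0 : a 0 = 0 := by simp [ha, hz, framedDisk]
  have ha0' : constantCoeff z = 0 := by
    rw [hz]; simp [framedDisk]
  have hzz : ∀ n, coeff n (z * z) = ∑ k ∈ range (n+1), a k * a (n-k) := by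
    intro n
    rw [PowerSeries.coeff_mul, Finset.Nat.sum_antidiagonal_eq_sum_range_succ_mk]
  have hWz : ∀ n, coeff n ((X * d⁄dX ℚ z) * z) = ∑ k ∈ range (n+1), (k:ℚ) * a k * a (n-k) := by
    intro n
    rw [PowerSeries.coeff_mul, Finset.Nat.sum_antidiagonal_eq_sum_range_succ_mk]
    apply Finset.sum_congr rfl
    intro j _
    rw [coeff_X_deriv]
  ext n
  rw [map_sub, map_sub, LinearMap.map_smul, hzz n, hWz n, coeff_X_deriv, smul_eq_mul]
  match n with
  | 0 => simp [ha0, ha0']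
  | 1 =>
    rw [Finset.sum_range_succ, Finset.sum_range_succ, Finset.sum_range_zero,
      Finset.sum_range_succ, Finset.sum_range_succ, Finset.sum_range_zero]
    simp [ha0]
  | (m+2) =>
    have hsym := sym a (m+2)
    have hc : (∑ k ∈ range (m+2+1), a k * a (m+2-k)) = Ra (f+1) (2*f) m := by
      rw [← hzz (m+2)]
      exact coeff_zz f hf m
    have han : coeff (m+2) z = Ra (f+1) f (m+1) := coeff_fd f (m+1) hf
    have hkey := keynum f m hf
    rw [hc] at hsym
    rw [hc, han]
    push_cast at hkey hsym ⊢
    linear_combination (1/2) * hkey + (((f:ℚ)+1)/2) * hsym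

lemma xdG (f : ℕ) (hf : 1 ≤ f) :
    X * (d⁄dX ℚ (framedDisk f * (1 - framedDisk f) ^ f))
      = framedDisk f * (1 - framedDisk f) ^ f := by
  set z := framedDisk f with hz
  set y := 1 - z with hy
  set D := d⁄dX ℚ with hD
  obtain ⟨e, rfl⟩ : ∃ e, f = e + 1 := ⟨f - 1, by omega⟩
  have hDy : D y = - D z := by
    rw [hy, map_sub, Derivation.map_one_eq_zero]; ring
  have hDyf : D (y ^ (e+1)) = ((e+1 : ℕ) : ℚ⟦X⟧) * y ^ e * (- D z) := by
    rw [Derivation.leibniz_pow, hDy]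
    rw [nsmul_eq_mul, Nat.add_sub_cancel, smul_eq_mul]
    ring
  have hL : D (z * y ^ (e+1)) = z * D (y^(e+1)) + y^(e+1) * D z := by
    rw [Derivation.leibniz, smul_eq_mul, smul_eq_mul]
  have hR := Rrel (e+1) (by omega)
  rw [smul_eq_C_mul, show C (((e+1:ℕ):ℚ)+1) = (((e+1:ℕ):ℚ⟦X⟧)) + 1 from by
    rw [map_add, map_one, map_natCast]] at hR
  rw [← hz] at hR
  -- now pure algebra
  rw [hL, hDyf]
  have expand : X * (z * (((e+1 : ℕ) : ℚ⟦X⟧) * y ^ e * (- D z)) + y^(e+1) * D z)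
      = y ^ e * ((X * D z) * (y - ((e+1 : ℕ) : ℚ⟦X⟧) * z)) := by
    rw [hy]; ring
  rw [expand, show y - ((e+1 : ℕ) : ℚ⟦X⟧) * z = 1 - (((e+1:ℕ):ℚ⟦X⟧) + 1) * z from by rw [hy]; ring]
  have hR' : (X * D z) * (1 - (((e+1:ℕ):ℚ⟦X⟧) + 1) * z) = z - z * z := by
    rw [← hD] at hR
    linear_combination -hR
  rw [hR']
  rw [hy]; ring

lemma coeff_X_deriv' (g : PowerSeries ℚ) (n : ℕ) :
    coeff n (X * d⁄dX ℚ g) = (n:ℚ) * coeff n g := by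
  cases n with
  | zero => simp [PowerSeries.coeff_zero_eq_constantCoeff, map_mul]
  | succ k => rw [coeff_succ_X_mul, coeff_derivative]; push_cast; ring

lemma framedDisk_const (f : ℕ) : constantCoeff (framedDisk f) = 0 := by
  rw [← PowerSeries.coeff_zero_eq_constantCoeff_apply]
  simp [framedDisk]

lemma framedDisk_coeff_one (f : ℕ) : coeff 1 (framedDisk f) = 1 := by
  simp [framedDisk]

lemma G_eq_X (f : ℕ) (hf : 1 ≤ f) : framedDisk f * (1 - framedDisk f) ^ f = X := by
  set z := framedDisk f with hz
  set G := z * (1 - z) ^ f with hG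
  ext n
  match n with
  | 0 =>
    rw [PowerSeries.coeff_zero_eq_constantCoeff_apply, PowerSeries.coeff_zero_eq_constantCoeff_apply]
    rw [hG, map_mul, hz, framedDisk_const, zero_mul, constantCoeff_X]
  | 1 =>
    have c0 : coeff 0 z = 0 := by
      rw [PowerSeries.coeff_zero_eq_constantCoeff_apply, hz, framedDisk_const]
    have c1 : coeff 1 z = 1 := by rw [hz]; exact framedDisk_coeff_one f
    have cw : coeff 0 ((1-z)^f) = 1 := by
      rw [PowerSeries.coeff_zero_eq_constantCoeff_apply, map_pow, map_sub, map_one, hz,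
        framedDisk_const, sub_zero, one_pow]
    rw [PowerSeries.coeff_one_X, hG, PowerSeries.coeff_mul,
      Finset.Nat.sum_antidiagonal_eq_sum_range_succ_mk, Finset.sum_range_succ,
      Finset.sum_range_succ, Finset.sum_range_zero]
    simp [c0, c1, cw]
  | (m+2) =>
    have h := congrArg (coeff (m+2)) (xdG f hf)
    rw [coeff_X_deriv'] at h
    rw [← hz, ← hG] at h
    have hcoef : ((m+2 : ℕ):ℚ) - 1 ≠ 0 := by
      have hm : (0:ℚ) ≤ (m:ℚ) := Nat.cast_nonneg m
      push_cast
      intro hcon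
      nlinarith
    have : coeff (m+2) G = 0 := by
      have h2 : (((m+2:ℕ):ℚ) - 1) * coeff (m+2) G = 0 := by push_cast at h ⊢; linear_combination h
      exact (mul_eq_zero.mp h2).resolve_left hcoef
    rw [this, PowerSeries.coeff_X, if_neg (by omega)]

/-- The framed vertex mirror curve `-y^{f+1} + y^f - x = 0` (`f` a positive integer),
solved for `y` near `(x,y) = (0,1)`, has the unique power series solution
`y(x) = 1 - ∑_{n≥1} (x^n ∏_{j=0}^{n-2}(nf+j)/n!)`: the coefficient of `x^n` in
`1 - y(x)` is `∏_{j=0}^{n-2}(nf+j)/n!`. -/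
theorem framed_vertex_disk_expansion (f : ℕ) (hf : 0 < f) :
    ((1 - framedDisk f) ^ f - (1 - framedDisk f) ^ (f + 1) = PowerSeries.X) ∧
      ∀ y : PowerSeries ℚ, PowerSeries.constantCoeff y = 1 →
        y ^ f - y ^ (f + 1) = PowerSeries.X → y = 1 - framedDisk f := by
  have hG := G_eq_X f hf
  constructor
  · rw [pow_succ]
    linear_combination hG
  · intro y hy1 hy2
    set z := framedDisk f with hz
    set u : PowerSeries ℚ := 1 - y with hu
    have hueq : u * (1 - u) ^ f = X := by
      rw [hu, show (1 : ℚ⟦X⟧) - (1 - y) = y from by ring]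
      rw [pow_succ] at hy2
      linear_combination hy2
    set S : PowerSeries ℚ := ∑ i ∈ range f, (1-u)^i * (1-z)^(f-1-i) with hS
    have hgeom := geom_sum₂_mul (1-u) (1-z) f
    have hfac : (u - z) * ((1-u)^f - z * S) = 0 := by
      linear_combination hueq - hG + z * hgeom
    have hhne : ((1-u)^f - z * S) ≠ 0 := by
      intro hcon
      have := congrArg (constantCoeff) hcon
      rw [map_sub, map_pow, map_sub, map_one, map_mul, hu, map_sub, map_one, hy1,
        hz, framedDisk_const] at this
      norm_num at this
    have huz : u - z = 0 := by
      rcases mul_eq_zero.mp hfac with h | h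
      · exact h
      · exact absurd h hhne
    have : u = z := by linear_combination huz
    rw [hu] at this
    linear_combination -this
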